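/- Let X be a weakly involutive quantum B-algebra, τ a good map (i.e., (τ(x⁻))˜ = (τ(x˜))⁻ for all x), and define σx = (τ(x⁻))˜. Then σ is also good, and τx = (σ(x⁻))˜ = (σ(x˜))⁻ for all x. Moreover τ is decreasing (τx ≤ x for all x) if and only if σ is increasing (x ≤ σx for all x), and τ is isotone if and only if σ is isotone. -/
import Mathlib


class QuantumBAlgebra (X : Type*) extends PartialOrder X where
  arr : X → X → X
  sq : X → X → X
  qb1 : ∀ x y z : X, arr y z ≤ arr (arr x y) (arr x z)
  qb2 : ∀ x y z : X, sq y z ≤ arr (sq x y) (sq x z)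
  qb3 : ∀ x y z : X, y ≤ z → arr x y ≤ arr x z
  qb4 : ∀ x y z : X, x ≤ arr y z ↔ y ≤ sq x z

open QuantumBAlgebra

theorem stmt18 {X : Type*} [QuantumBAlgebra X] (d : X)
    (hwi : ∀ x : X, sq (arr x d) d = x ∧ arr (sq x d) d = x)
    (τ : X → X) (hgood : ∀ x : X, sq (τ (arr x d)) d = arr (τ (sq x d)) d)
    (σ : X → X) (hσ : ∀ x : X, σ x = sq (τ (arr x d)) d) :
    (∀ x : X, sq (σ (arr x d)) d = arr (σ (sq x d)) d) ∧
    (∀ x : X, τ x = sq (σ (arr x d)) d ∧ τ x = arr (σ (sq x d)) d) ∧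
    ((∀ x : X, τ x ≤ x) ↔ (∀ x : X, x ≤ σ x)) ∧
    (Monotone τ ↔ Monotone σ) := by
  -- antitone lemmas
  have anti_sq : ∀ x y : X, x ≤ y ↔ sq y d ≤ sq x d := by
    intro x y
    constructor
    · intro h
      exact (qb4 x (sq y d) d).mp (le_of_le_of_eq h (hwi y).2.symm)
    · intro h
      exact le_of_le_of_eq ((qb4 x (sq y d) d).mpr h) (hwi y).2
  have anti_arr : ∀ x y : X, x ≤ y ↔ arr y d ≤ arr x d := by
    intro x y
    constructor
    · intro h
      exact (qb4 (arr y d) x d).mpr (le_of_le_of_eq h (hwi y).1.symm)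
    · intro h
      exact le_of_le_of_eq ((qb4 (arr y d) x d).mp h) (hwi y).1
  -- σ(x⁻) = (τ x)⁻
  have hσarr : ∀ x : X, σ (arr x d) = arr (τ x) d := by
    intro x
    rw [hσ (arr x d), hgood (arr x d), (hwi x).1]
  -- σ(x˜) = (τ x)˜
  have hσsq : ∀ x : X, σ (sq x d) = sq (τ x) d := by
    intro x
    rw [hσ (sq x d), (hwi x).2]
  -- τ x = (σ(x⁻))˜ and τ x = (σ(x˜))⁻
  have hτ1 : ∀ x : X, τ x = sq (σ (arr x d)) d := by
    intro x; rw [hσarr x, (hwi (τ x)).1]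
  have hτ2 : ∀ x : X, τ x = arr (σ (sq x d)) d := by
    intro x; rw [hσsq x, (hwi (τ x)).2]
  refine ⟨fun x => by rw [← hτ1 x, ← hτ2 x], fun x => ⟨hτ1 x, hτ2 x⟩, ?_, ?_⟩
  · constructor
    · intro h x
      rw [hσ x]
      exact (qb4 (τ (arr x d)) x d).mp (h (arr x d))
    · intro h x
      have := h (sq x d)
      rw [hσsq x] at this
      exact (anti_sq (τ x) x).mpr this
  · constructor
    · intro h x y hxy
      have : arr y d ≤ arr x d := (anti_arr x y).mp hxy
      have := h this
      calc σ x = sq (τ (arr x d)) d := hσ x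
        _ ≤ sq (τ (arr y d)) d := (anti_sq _ _).mp this
        _ = σ y := (hσ y).symm
    · intro h x y hxy
      have : arr y d ≤ arr x d := (anti_arr x y).mp hxy
      have := h this
      rw [hσarr x, hσarr y] at this
      exact (anti_arr (τ x) (τ y)).mpr this
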